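/- arXiv:2303.03218 — 2 statements merged into one kernel-verified Lean document; each statement's English description precedes it below -/
import Mathlib

section
/- Let b : ℝ^d → ℝ^d be a globally bounded Lipschitz vector field with flow Φ_t. Then for every (t,x) ∈ ℝ × ℝ^d, the directional derivative of the Lipschitz map Φ_t at x in the direction b(x) exists and equals b(Φ_t(x)); that is, lim_{h→0} (Φ_t(x + h·b(x)) − Φ_t(x))/h = b(Φ_t(x)). -/
open Set Filter

/-- Global uniqueness for ODEs with Lipschitz RHS. -/
lemma my_ODE_unique {E : Type*} [NormedAddCommGroup E] [NormedSpace ℝ E]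
    {K : NNReal} {v : E → E} (hv : LipschitzWith K v)
    {f g : ℝ → E}
    (hf : ∀ t, HasDerivAt f (v (f t)) t)
    (hg : ∀ t, HasDerivAt g (v (g t)) t)
    (h0 : f 0 = g 0) : ∀ t, f t = g t := by
  intro t
  have ht : t ∈ Ioo (-(|t| + 1)) (|t| + 1) := by
    constructor
    · nlinarith [abs_nonneg t, neg_abs_le t]
    · nlinarith [le_abs_self t]
  refine ODE_solution_unique_of_mem_Ioo (v := fun _ => v) (s := fun _ => univ)
    (K := K) (fun _ _ => hv.lipschitzOnWith) (t₀ := 0) ?_ ?_ ?_ h0 ht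
  · constructor
    · nlinarith [abs_nonneg t]
    · nlinarith [abs_nonneg t]
  · exact fun s _ => ⟨hf s, trivial⟩
  · exact fun s _ => ⟨hg s, trivial⟩

/-- Gronwall: the flow is Lipschitz in the space variable. -/
lemma my_flow_lip {E : Type*} [NormedAddCommGroup E] [NormedSpace ℝ E]
    {K : NNReal} {b : E → E} (hLip : LipschitzWith K b)
    {Φ : ℝ → E → E}
    (hΦ0 : ∀ x, Φ 0 x = x)
    (hODE : ∀ t x, HasDerivAt (fun s => Φ s x) (b (Φ t x)) t)
    (t : ℝ) (x y : E) :
    dist (Φ t x) (Φ t y) ≤ dist x y * Real.exp (K * |t|) := by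
  rcases le_or_gt 0 t with ht | ht
  · have := dist_le_of_trajectories_ODE (v := fun _ => b) (fun _ => hLip)
      (f := fun s => Φ s x) (g := fun s => Φ s y) (a := 0) (b := t) (δ := dist x y)
      (fun s _ => (hODE s x).continuousAt.continuousWithinAt)
      (fun s _ => (hODE s x).hasDerivWithinAt)
      (fun s _ => (hODE s y).continuousAt.continuousWithinAt)
      (fun s _ => (hODE s y).hasDerivWithinAt)
      (by simp [hΦ0]) t ⟨ht, le_rfl⟩
    simpa [abs_of_nonneg ht] using this
  · -- backward time: reverse
    have hneg : ∀ (z : E) (s : ℝ), HasDerivAt (fun s => Φ (-s) z) (-(b (Φ (-s) z))) s := by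
      intro z s
      have := (hODE (-s) z).scomp s (hasDerivAt_neg s)
      simpa [Function.comp_def] using this
    have := dist_le_of_trajectories_ODE (v := fun _ z => -(b z)) (fun _ => hLip.neg)
      (f := fun s => Φ (-s) x) (g := fun s => Φ (-s) y) (a := 0) (b := -t) (δ := dist x y)
      (fun s _ => (hneg x s).continuousAt.continuousWithinAt)
      (fun s _ => (hneg x s).hasDerivWithinAt)
      (fun s _ => (hneg y s).continuousAt.continuousWithinAt)
      (fun s _ => (hneg y s).hasDerivWithinAt)
      (by simp [hΦ0]) (-t) ⟨by linarith, le_rfl⟩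
    simpa [abs_of_neg ht] using this

/-- **Directional differentiability of the flow map along the vector field.**
If `b : ℝ^d → ℝ^d` is globally bounded and Lipschitz with flow `Φ`, then for every
`(t, x)` the directional (line) derivative of the Lipschitz map `Φ t` at `x` in the
direction `b x` exists and equals `b (Φ t x)`:
`lim_{h→0} (Φ t (x + h • b x) − Φ t x)/h = b (Φ t x)`. -/
theorem flow_lineDeriv_along_b
    {d : ℕ} (b : (Fin d → ℝ) → (Fin d → ℝ)) (Φ : ℝ → (Fin d → ℝ) → (Fin d → ℝ))
    (K : NNReal) (hLip : LipschitzWith K b)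
    (C : ℝ) (hbound : ∀ x, ‖b x‖ ≤ C)
    (hΦ0 : ∀ x, Φ 0 x = x)
    (hODE : ∀ t x, HasDerivAt (fun s => Φ s x) (b (Φ t x)) t) :
    ∀ (t : ℝ) (x : Fin d → ℝ), HasLineDerivAt ℝ (Φ t) (b (Φ t x)) x (b x) := by
  intro t x
  -- semigroup property
  have semi : ∀ h : ℝ, Φ t (Φ h x) = Φ (t + h) x := by
    intro h
    have hg : ∀ s : ℝ, HasDerivAt (fun s => Φ (s + h) x) (b (Φ (s + h) x)) s := by
      intro s
      have := (hODE (s + h) x).scomp s ((hasDerivAt_id s).add_const h)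
      simpa [Function.comp_def] using this
    have := my_ODE_unique hLip (f := fun s => Φ s (Φ h x)) (g := fun s => Φ (s + h) x)
      (fun s => hODE s (Φ h x)) hg (by simp [hΦ0]) t
    simpa using this
  -- E h := Φ h x - x - h • b x is o(h)
  have hE : (fun h : ℝ => Φ h x - x - h • b x) =o[nhds (0:ℝ)] (fun h => h) := by
    have h0 : HasDerivAt (fun h => Φ h x) (b x) 0 := by
      have := hODE 0 x; rwa [hΦ0] at this
    have := (hasDerivAt_iff_isLittleO (f := fun h => Φ h x) (f' := b x) (x := (0:ℝ))).1 h0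
    simpa [hΦ0] using this
  -- g h := Φ (t + h) x has derivative b (Φ t x) at 0
  have hg0 : HasDerivAt (fun h : ℝ => Φ (t + h) x) (b (Φ t x)) 0 := by
    have := (hODE (t + id 0) x).scomp (0:ℝ) ((hasDerivAt_id (0:ℝ)).const_add t)
    simpa [Function.comp_def] using this
  -- f - g is o(h)
  have hfg : (fun h : ℝ => Φ t (x + h • b x) - Φ (t + h) x) =o[nhds (0:ℝ)] (fun h => h) := by
    have hO : (fun h : ℝ => Φ t (x + h • b x) - Φ (t + h) x) =O[nhds (0:ℝ)]
        (fun h : ℝ => Φ h x - x - h • b x) := by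
      apply Asymptotics.IsBigO.of_bound (Real.exp (K * |t|))
      filter_upwards with h
      have hlt := my_flow_lip hLip hΦ0 hODE t (x + h • b x) (Φ h x)
      rw [dist_eq_norm, dist_eq_norm] at hlt
      calc ‖Φ t (x + h • b x) - Φ (t + h) x‖
          = ‖Φ t (x + h • b x) - Φ t (Φ h x)‖ := by rw [semi h]
        _ ≤ ‖x + h • b x - Φ h x‖ * Real.exp (K * |t|) := hlt
        _ = Real.exp (K * |t|) * ‖Φ h x - x - h • b x‖ := by
            rw [show Φ h x - x - h • b x = -(x + h • b x - Φ h x) by abel, norm_neg, mul_comm]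
    exact hO.trans_isLittleO hE
  -- conclude
  rw [HasLineDerivAt, hasDerivAt_iff_isLittleO]
  have hg' := (hasDerivAt_iff_isLittleO.1 hg0)
  simp only [sub_zero, add_zero, zero_smul] at hg' ⊢
  have h2 : (fun h : ℝ => (Φ t (x + h • b x) - Φ (t + h) x)
      + (Φ (t + h) x - Φ t x - h • b (Φ t x)))
      = (fun h : ℝ => Φ t (x + h • b x) - Φ t x - h • b (Φ t x)) := by
    funext h; abel
  rw [← h2]
  exact hfg.add hg'
end

section
/- Let b be a globally bounded Lipschitz vector field on ℝ^d with flow Φ, let α ∈ C¹_c((0,1)) and β ∈ C¹_c(ℝ^d), and set ψ(t,x) := α(t)·β(Φ(−t, x)). Then although ψ is in general only Lipschitz, at every point (t,x) ∈ (0,1) × ℝ^d the directional derivative of ψ in the direction (1, b(x)) exists and equals α'(t)·β(Φ(−t, x)). That is, lim_{h→0} (ψ(t+h, x + h b(x)) − ψ(t,x))/h = α'(t) β(Φ(−t,x)). -/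
open Set Filter

section Aux

variable {d : ℕ} {b : (Fin d → ℝ) → (Fin d → ℝ)} {Φ : ℝ → (Fin d → ℝ) → (Fin d → ℝ)}
  {K : NNReal}

/-- Semigroup property of the flow, from uniqueness of ODE solutions. -/
lemma flow_semigroup (hLip : LipschitzWith K b) (hΦ0 : ∀ x, Φ 0 x = x)
    (hODE : ∀ t x, HasDerivAt (fun s => Φ s x) (b (Φ t x)) t)
    (s u : ℝ) (x : Fin d → ℝ) : Φ s (Φ u x) = Φ (s + u) x := by
  have h := ODE_solution_unique_of_mem_Ioo (v := fun _ y => b y) (s := fun _ => (univ : Set (Fin d → ℝ)))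
    (f := fun r => Φ r (Φ u x)) (g := fun r => Φ (r + u) x)
    (a := -(|s| + 1)) (b := |s| + 1) (t₀ := 0)
    (fun _ _ => hLip.lipschitzOnWith)
    (by constructor <;> [linarith [abs_nonneg s]; linarith [abs_nonneg s]])
    (fun r _ => ⟨hODE r (Φ u x), trivial⟩)
    (fun r _ => ⟨by
      have h1 : HasDerivAt (fun w : ℝ => w + u) 1 r := by
        simpa using (hasDerivAt_id r).add_const u
      have := (hODE (r + u) x).scomp r h1
      simpa [Function.comp_def] using this, trivial⟩)
    (by simp [hΦ0])
  have hs : s ∈ Ioo (-(|s| + 1)) (|s| + 1) :=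
    ⟨by linarith [neg_abs_le s], by linarith [le_abs_self s]⟩
  exact h hs

/-- Gronwall: the flow is Lipschitz in space, uniformly on bounded time intervals. -/
lemma flow_lipschitz (hLip : LipschitzWith K b)
    (hODE : ∀ t x, HasDerivAt (fun s => Φ s x) (b (Φ t x)) t)
    (s : ℝ) (x y : Fin d → ℝ) :
    dist (Φ s x) (Φ s y) ≤ dist (Φ 0 x) (Φ 0 y) * Real.exp (K * |s|) := by
  rcases le_or_gt 0 s with hs | hs
  · have h := dist_le_of_trajectories_ODE (v := fun _ y => b y) (a := 0) (b := s)
      (f := fun r => Φ r x) (g := fun r => Φ r y) (δ := dist (Φ 0 x) (Φ 0 y))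
      (fun _ => hLip)
      (fun r _ => (hODE r x).continuousAt.continuousWithinAt)
      (fun r _ => (hODE r x).hasDerivWithinAt)
      (fun r _ => (hODE r y).continuousAt.continuousWithinAt)
      (fun r _ => (hODE r y).hasDerivWithinAt)
      le_rfl s ⟨hs, le_rfl⟩
    simpa [abs_of_nonneg hs] using h
  · have hK : LipschitzWith K (fun z => -(b z)) := by
      have := (LipschitzWith.id (α := Fin d → ℝ)).neg.comp hLip
      simpa [Function.comp_def] using this
    have hder : ∀ (z : Fin d → ℝ) (r : ℝ),
        HasDerivAt (fun w => Φ (-w) z) (-(b (Φ (-r) z))) r := by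
      intro z r
      have := (hODE (-r) z).scomp r (hasDerivAt_neg r)
      simpa [Function.comp_def] using this
    have h := dist_le_of_trajectories_ODE (v := fun _ z => -(b z)) (a := 0) (b := -s)
      (f := fun r => Φ (-r) x) (g := fun r => Φ (-r) y) (δ := dist (Φ 0 x) (Φ 0 y))
      (fun _ => hK)
      (fun r _ => (hder x r).continuousAt.continuousWithinAt)
      (fun r _ => (hder x r).hasDerivWithinAt)
      (fun r _ => (hder y r).continuousAt.continuousWithinAt)
      (fun r _ => (hder y r).hasDerivWithinAt)
      (by simp) (-s) ⟨by linarith, le_rfl⟩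
    simpa [abs_of_neg hs] using h

end Aux

/-- **Everywhere existence of the directional derivative of the Lipschitz test function
`ψ(t,x) = α(t) β(Φ(−t, x))` along `(1, b(x))`.**
Here `b` is a globally bounded Lipschitz vector field with flow `Φ`,
`α ∈ C¹_c((0,1))`, `β ∈ C¹_c(ℝ^d)`. At every `(t,x) ∈ (0,1) × ℝ^d` the line derivative of
`ψ` in the direction `(1, b x)` exists and equals `α'(t) β(Φ(−t,x))`. -/
theorem lineDeriv_of_transported_testFunction
    {d : ℕ} (b : (Fin d → ℝ) → (Fin d → ℝ)) (Φ : ℝ → (Fin d → ℝ) → (Fin d → ℝ))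
    (K : NNReal) (hLip : LipschitzWith K b)
    (C : ℝ) (hbound : ∀ x, ‖b x‖ ≤ C)
    (hΦ0 : ∀ x, Φ 0 x = x)
    (hODE : ∀ t x, HasDerivAt (fun s => Φ s x) (b (Φ t x)) t)
    (α : ℝ → ℝ) (hα : ContDiff ℝ 1 α) (hαc : HasCompactSupport α)
    (hαs : tsupport α ⊆ Set.Ioo (0 : ℝ) 1)
    (β : (Fin d → ℝ) → ℝ) (hβ : ContDiff ℝ 1 β) (hβc : HasCompactSupport β) :
    ∀ (t : ℝ), t ∈ Set.Ioo (0 : ℝ) 1 → ∀ (x : Fin d → ℝ),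
      HasLineDerivAt ℝ (fun p : ℝ × (Fin d → ℝ) => α p.1 * β (Φ (-p.1) p.2))
        (deriv α t * β (Φ (-t) x)) (t, x) ((1 : ℝ), b x) := by
  intro t _ x
  -- unfold HasLineDerivAt
  rw [HasLineDerivAt]
  set g : ℝ → (Fin d → ℝ) := fun h => Φ (-(t + h)) (x + h • b x) with hg
  have hfun : (fun h : ℝ => (fun p : ℝ × (Fin d → ℝ) => α p.1 * β (Φ (-p.1) p.2))
      ((t, x) + h • ((1 : ℝ), b x)))
      = fun h => α (t + h) * β (Φ (-t) x) + α (t + h) * (β (g h) - β (Φ (-t) x)) := by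
    funext h
    simp only [Prod.smul_mk, Prod.mk_add_mk, smul_eq_mul, mul_one, hg]
    ring
  rw [hfun]
  have h1 : HasDerivAt (fun h : ℝ => α (t + h) * β (Φ (-t) x))
      (deriv α t * β (Φ (-t) x)) 0 := by
    have hαd : HasDerivAt α (deriv α t) t :=
      ((hα.differentiable one_ne_zero) t).hasDerivAt
    have hsh : HasDerivAt (fun h : ℝ => t + h) 1 0 := by
      simpa using (hasDerivAt_id (0 : ℝ)).const_add t
    rw [← add_zero t] at hαd
    have := (hαd.scomp (0 : ℝ) hsh)
    simpa using this.mul_const (β (Φ (-t) x))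
  have h2 : HasDerivAt (fun h : ℝ => α (t + h) * (β (g h) - β (Φ (-t) x))) 0 0 := by
    rw [hasDerivAt_iff_isLittleO]
    simp only [sub_zero, smul_zero, zero_add, add_zero, sub_self, mul_zero, smul_eq_mul]
    have hg0 : g 0 = Φ (-t) x := by simp [hg]
    -- the little-o estimate for the flow at time 0
    have he : (fun h : ℝ => Φ h x - x - h • b x) =o[nhds (0 : ℝ)] (fun h => h) := by
      have := hasDerivAt_iff_isLittleO.1 (hODE 0 x)
      simpa [hΦ0] using this
    obtain ⟨A, hA⟩ := hαc.exists_bound_of_continuous (hα.continuous)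
    obtain ⟨Lβ, hLβ⟩ := hβ.lipschitzWith_of_hasCompactSupport hβc one_ne_zero
    have hbig : (fun h : ℝ => α (t + h) * (β (g h) - β (Φ (-t) x)))
        =O[nhds (0 : ℝ)] (fun h : ℝ => Φ h x - x - h • b x) := by
      apply Asymptotics.IsBigO.of_bound (A * (Lβ * Real.exp (K * (|t| + 1))))
      filter_upwards [Metric.ball_mem_nhds (0 : ℝ) zero_lt_one] with h hh
      have hh1 : |h| < 1 := by simpa [Real.dist_eq] using hh
      -- key distance estimate via semigroup + Gronwall
      have hsg : Φ (-(t + h)) (Φ h x) = Φ (-t) x := by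
        rw [flow_semigroup hLip hΦ0 hODE]
        ring_nf
      have hlip := flow_lipschitz hLip hODE (-(t + h)) (x + h • b x) (Φ h x)
      rw [hsg] at hlip
      have hdist0 : dist (Φ 0 (x + h • b x)) (Φ 0 (Φ h x)) = ‖Φ h x - x - h • b x‖ := by
        rw [hΦ0, hΦ0, dist_eq_norm,
          show x + h • b x - Φ h x = -(Φ h x - x - h • b x) by abel, norm_neg]
      rw [hdist0] at hlip
      have hdd : dist (g h) (Φ (-t) x) ≤
          ‖Φ h x - x - h • b x‖ * Real.exp (K * |(-(t + h))|) := hlip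
      have hexp : Real.exp ((K : ℝ) * |(-(t + h))|) ≤ Real.exp ((K : ℝ) * (|t| + 1)) := by
        apply Real.exp_le_exp.2
        have : |(-(t + h))| ≤ |t| + 1 := by
          rw [abs_neg]
          calc |t + h| ≤ |t| + |h| := abs_add_le _ _
          _ ≤ |t| + 1 := by linarith
        exact mul_le_mul_of_nonneg_left this K.2
      calc ‖α (t + h) * (β (g h) - β (Φ (-t) x))‖
          = |α (t + h)| * ‖β (g h) - β (Φ (-t) x)‖ := by
            rw [norm_mul]; rfl
        _ ≤ A * (Lβ * dist (g h) (Φ (-t) x)) := by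
            apply mul_le_mul (by simpa using hA (t + h)) ?_ (norm_nonneg _)
              ((abs_nonneg _).trans (by simpa using hA (t + h)))
            rw [← dist_eq_norm]
            exact hLβ.dist_le_mul _ _
        _ ≤ A * (Lβ * (‖Φ h x - x - h • b x‖ * Real.exp (K * (|t| + 1)))) := by
            have hA0 : (0 : ℝ) ≤ A := (abs_nonneg _).trans (by simpa using hA (t + h))
            have hdd2 : dist (g h) (Φ (-t) x) ≤
                ‖Φ h x - x - h • b x‖ * Real.exp (K * (|t| + 1)) :=
              hdd.trans (mul_le_mul_of_nonneg_left hexp (norm_nonneg _))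
            exact mul_le_mul_of_nonneg_left
              (mul_le_mul_of_nonneg_left hdd2 Lβ.2) hA0
        _ = A * (Lβ * Real.exp (K * (|t| + 1))) * ‖Φ h x - x - h • b x‖ := by ring
    have := hbig.trans_isLittleO he
    simpa [hg0] using this
  have := h1.add h2
  simpa [Pi.add_def] using this
end
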